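/- Let K be a field, let D₁,…,Dₙ and E₁,…,Eₙ be finite nonempty subsets of K with Eᵢ ⊆ Dᵢ for each i, and set X = D₁ × ⋯ × Dₙ and Y = E₁ × ⋯ × Eₙ, so that Y ⊆ X are grids of points in Kⁿ. Then the ideal I₂ = I(X) : I(Y) equals I(X ∖ Y) and has GFan number 1, i.e., LT_σ(I₂) = LT_τ(I₂) for all monomial orders σ and τ. -/

import Mathlib

set_option maxHeartbeats 1000000

open MvPolynomial

/-- The leading monomial (σ-largest exponent vector in the support) of a polynomial. -/
noncomputable def leadMonomial {n : ℕ} {K : Type*} [Field K]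
    (m : MonomialOrder (Fin n)) (f : MvPolynomial (Fin n) K) : Fin n →₀ ℕ :=
  m.toSyn.symm (f.support.sup fun s => m.toSyn s)

/-- The leading term ideal of an ideal. -/
noncomputable def leadTermIdeal {n : ℕ} {K : Type*} [Field K]
    (m : MonomialOrder (Fin n)) (I : Ideal (MvPolynomial (Fin n) K)) :
    Ideal (MvPolynomial (Fin n) K) :=
  Ideal.span {g | ∃ f ∈ I, f ≠ 0 ∧ g = monomial (leadMonomial m f) (1 : K)}

/-- The vanishing ideal of a set of points of `Kⁿ`. -/
noncomputable def vanishingIdealOfPoints {n : ℕ} {K : Type*} [Field K]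
    (S : Set (Fin n → K)) : Ideal (MvPolynomial (Fin n) K) :=
  ⨅ p ∈ S, RingHom.ker (eval p)

namespace GFanAux

variable {n : ℕ} {K : Type*} [Field K] (m : MonomialOrder (Fin n))

lemma toSyn_leadMonomial (f : MvPolynomial (Fin n) K) :
    m.toSyn (leadMonomial m f) = f.support.sup fun s => m.toSyn s :=
  m.toSyn.apply_symm_apply _

lemma le_lead {f : MvPolynomial (Fin n) K} {b : Fin n →₀ ℕ} (hb : b ∈ f.support) :
    m.toSyn b ≤ m.toSyn (leadMonomial m f) := by
  rw [toSyn_leadMonomial]; exact Finset.le_sup hb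

lemma lead_mem {f : MvPolynomial (Fin n) K} (hf : f ≠ 0) : leadMonomial m f ∈ f.support := by
  have h : f.support.Nonempty :=
    Finset.nonempty_iff_ne_empty.mpr (fun h => hf (support_eq_empty.mp h))
  obtain ⟨b, hb, hbe⟩ := Finset.exists_mem_eq_sup f.support h (fun s => m.toSyn s)
  have hb' : leadMonomial m f = b := m.toSyn.injective (by rw [toSyn_leadMonomial, hbe])
  rw [hb']; exact hb

lemma lead_coeff_ne_zero {f : MvPolynomial (Fin n) K} (hf : f ≠ 0) :
    f.coeff (leadMonomial m f) ≠ 0 :=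
  mem_support_iff.mp (lead_mem m hf)

lemma lead_eq {f : MvPolynomial (Fin n) K} {a : Fin n →₀ ℕ} (h1 : f.coeff a ≠ 0)
    (h2 : ∀ b ∈ f.support, m.toSyn b ≤ m.toSyn a) : leadMonomial m f = a := by
  apply m.toSyn.injective
  rw [toSyn_leadMonomial]
  exact le_antisymm (Finset.sup_le h2) (Finset.le_sup (mem_support_iff.mpr h1))

lemma lead_one : leadMonomial m (1 : MvPolynomial (Fin n) K) = 0 := by
  apply lead_eq m (by simp)
  intro b hb
  have hb' : b = 0 := by
    by_contra hb0
    exact (mem_support_iff.mp hb) (by simp [MvPolynomial.coeff_one, eq_comm, hb0])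
  simp [hb']

lemma coeff_mul_lead (f g : MvPolynomial (Fin n) K) :
    (f * g).coeff (leadMonomial m f + leadMonomial m g) =
      f.coeff (leadMonomial m f) * g.coeff (leadMonomial m g) := by
  classical
  rw [coeff_mul]
  have hmem : ((leadMonomial m f, leadMonomial m g) : (Fin n →₀ ℕ) × (Fin n →₀ ℕ))
      ∈ Finset.HasAntidiagonal.antidiagonal (leadMonomial m f + leadMonomial m g) := by
    simp [Finset.HasAntidiagonal.mem_antidiagonal]
  apply Finset.sum_eq_single_of_mem _ hmem
  · rintro ⟨u, v⟩ hp hne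
    by_contra hc
    have hu : u ∈ f.support := mem_support_iff.mpr (fun h => hc (by simp [h]))
    have hv : v ∈ g.support := mem_support_iff.mpr (fun h => hc (by simp [h]))
    have hsum : u + v = leadMonomial m f + leadMonomial m g := Finset.HasAntidiagonal.mem_antidiagonal.mp hp
    have h1 : m.toSyn u ≤ m.toSyn (leadMonomial m f) := le_lead m hu
    have h2 : m.toSyn v ≤ m.toSyn (leadMonomial m g) := le_lead m hv
    have hse : m.toSyn u + m.toSyn v =
        m.toSyn (leadMonomial m f) + m.toSyn (leadMonomial m g) := by
      rw [← map_add, ← map_add, hsum]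
    have hu' : m.toSyn u = m.toSyn (leadMonomial m f) := by
      by_contra h
      exact absurd hse (ne_of_lt (add_lt_add_of_lt_of_le (lt_of_le_of_ne h1 h) h2))
    have hueq : u = leadMonomial m f := m.toSyn.injective hu'
    have hveq : v = leadMonomial m g := by
      have := hsum; rw [hueq] at this; exact add_left_cancel this
    exact hne (by rw [hueq, hveq])

lemma lead_mul {f g : MvPolynomial (Fin n) K} (hf : f ≠ 0) (hg : g ≠ 0) :
    leadMonomial m (f * g) = leadMonomial m f + leadMonomial m g := by
  classical
  apply lead_eq
  · rw [coeff_mul_lead]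
    exact mul_ne_zero (lead_coeff_ne_zero m hf) (lead_coeff_ne_zero m hg)
  · intro c hc
    obtain ⟨u, hu, v, hv, rfl⟩ := Finset.mem_add.mp (MvPolynomial.support_mul f g hc)
    rw [map_add, map_add]
    exact add_le_add (le_lead m hu) (le_lead m hv)

lemma lead_prod_monic {ι : Type*} (s : Finset ι) (F : ι → MvPolynomial (Fin n) K)
    (h1 : ∀ i ∈ s, F i ≠ 0) (h2 : ∀ i ∈ s, (F i).coeff (leadMonomial m (F i)) = 1) :
    (∏ i ∈ s, F i) ≠ 0 ∧ leadMonomial m (∏ i ∈ s, F i) = ∑ i ∈ s, leadMonomial m (F i) ∧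
      (∏ i ∈ s, F i).coeff (leadMonomial m (∏ i ∈ s, F i)) = 1 := by
  classical
  induction s using Finset.induction_on with
  | empty =>
    refine ⟨one_ne_zero, by simp [lead_one], by simp [lead_one]⟩
  | @insert a s ha ih =>
    obtain ⟨ih1, ih2, ih3⟩ := ih (fun i hi => h1 i (Finset.mem_insert_of_mem hi))
      (fun i hi => h2 i (Finset.mem_insert_of_mem hi))
    have hF0 : F a ≠ 0 := h1 a (Finset.mem_insert_self a s)
    rw [Finset.prod_insert ha, Finset.sum_insert ha]
    have hmul := lead_mul m hF0 ih1
    refine ⟨mul_ne_zero hF0 ih1, by rw [hmul, ih2], ?_⟩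
    rw [hmul, coeff_mul_lead, h2 a (Finset.mem_insert_self a s), ih3, one_mul]


lemma lead_X_sub_C (i : Fin n) (c : K) :
    leadMonomial m (X i - C c) = Finsupp.single i 1 ∧
      (X i - C c).coeff (Finsupp.single i 1) = 1 ∧ (X i - C c : MvPolynomial (Fin n) K) ≠ 0 := by
  classical
  have hc : (X i - C c : MvPolynomial (Fin n) K).coeff (Finsupp.single i 1) = 1 := by
    simp [coeff_sub, coeff_X', coeff_C, Finsupp.single_eq_zero, eq_comm]
  have hne : (X i - C c : MvPolynomial (Fin n) K) ≠ 0 := fun h => by simp [h] at hc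
  refine ⟨?_, hc, hne⟩
  apply lead_eq m (by rw [hc]; exact one_ne_zero)
  intro b hb
  have hsub := MvPolynomial.support_sub (σ := Fin n) _ _ hb
  rw [Finset.mem_union] at hsub
  rcases hsub with h | h
  · rw [MvPolynomial.support_X (R := K)] at h
    rw [Finset.mem_singleton.mp h]
  · have hb0 : b = 0 := by
      have := MvPolynomial.support_monomial_subset (s := (0 : Fin n →₀ ℕ)) (a := c) h
      simpa using this
    rw [hb0, map_zero]
    rw [← m.bot_eq_zero]
    exact bot_le

/-- the product `∏_{c ∈ s} (Xᵢ - c)`. -/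
noncomputable def linProd (i : Fin n) (s : Finset K) : MvPolynomial (Fin n) K :=
  ∏ c ∈ s, (X i - C c)

lemma X_sub_C_ne_zero (i : Fin n) (c : K) : (X i - C c : MvPolynomial (Fin n) K) ≠ 0 := by
  intro h
  have hc : (X i - C c : MvPolynomial (Fin n) K).coeff (Finsupp.single i 1) = 1 := by
    simp [coeff_sub, coeff_X', coeff_C, Finsupp.single_eq_zero, eq_comm]
  rw [h] at hc
  simp at hc

lemma linProd_ne_zero (i : Fin n) (s : Finset K) : linProd (K := K) i s ≠ 0 := by
  rw [linProd, Finset.prod_ne_zero_iff]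
  exact fun c _ => X_sub_C_ne_zero i c

lemma lead_linProd (i : Fin n) (s : Finset K) :
    leadMonomial m (linProd (K := K) i s) = Finsupp.single i s.card := by
  have h := (lead_prod_monic m s (fun c => (X i - C c)) (fun c _ => (lead_X_sub_C m i c).2.2)
    (fun c _ => by rw [(lead_X_sub_C m i c).1]; exact (lead_X_sub_C m i c).2.1)).2.1
  rw [linProd, h]
  have : ∀ c ∈ s, leadMonomial m (X i - C c : MvPolynomial (Fin n) K) = Finsupp.single i 1 :=
    fun c _ => (lead_X_sub_C m i c).1
  rw [Finset.sum_congr rfl this, Finset.sum_const, Finsupp.smul_single, smul_eq_mul, mul_one]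

lemma coeff_lead_linProd (i : Fin n) (s : Finset K) :
    (linProd (K := K) i s).coeff (leadMonomial m (linProd (K := K) i s)) = 1 :=
  (lead_prod_monic m s (fun c => (X i - C c)) (fun c _ => (lead_X_sub_C m i c).2.2)
    (fun c _ => by rw [(lead_X_sub_C m i c).1]; exact (lead_X_sub_C m i c).2.1)).2.2

lemma eval_linProd (i : Fin n) (s : Finset K) (p : Fin n → K) :
    eval p (linProd (K := K) i s) = ∏ c ∈ s, (p i - c) := by
  simp [linProd]

lemma eval_linProd_eq_zero {i : Fin n} {s : Finset K} {p : Fin n → K} (h : p i ∈ s) :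
    eval p (linProd (K := K) i s) = 0 := by
  rw [eval_linProd]
  exact Finset.prod_eq_zero h (by simp)

lemma eval_linProd_ne_zero {i : Fin n} {s : Finset K} {p : Fin n → K} (h : p i ∉ s) :
    eval p (linProd (K := K) i s) ≠ 0 := by
  rw [eval_linProd, Finset.prod_ne_zero_iff]
  intro c hc
  rw [sub_ne_zero]
  exact fun he => h (he ▸ hc)


lemma mem_vanishing {S : Set (Fin n → K)} {f : MvPolynomial (Fin n) K} :
    f ∈ vanishingIdealOfPoints S ↔ ∀ p ∈ S, eval p f = 0 := by
  simp [vanishingIdealOfPoints, Ideal.mem_iInf, RingHom.mem_ker]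

/-- A polynomial with exponents in the box vanishing on the whole grid is zero. -/
lemma vanish_box_grid : ∀ {n : ℕ} (D : Fin n → Finset K) (f : MvPolynomial (Fin n) K),
    (∀ a ∈ f.support, ∀ i, a i < (D i).card) →
    (∀ p : Fin n → K, (∀ i, p i ∈ D i) → eval p f = 0) → f = 0 := by
  intro n
  induction n with
  | zero =>
    intro D f _ hv
    have h0 := hv (fun i => i.elim0) (fun i => i.elim0)
    rw [eq_C_of_isEmpty f] at h0 ⊢
    rw [eval_C] at h0
    rw [h0, map_zero]
  | succ n ih =>
    intro D f hs hv
    set F := finSuccEquiv K n f with hF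
    -- high coefficients vanish
    have hdeg : ∀ k, (D 0).card ≤ k → F.coeff k = 0 := by
      intro k hk
      by_contra h0
      obtain ⟨mm, hmm⟩ := Finset.nonempty_iff_ne_empty.mpr
        (fun h => h0 (support_eq_empty.mp h))
      have hmem : (mm.cons k) ∈ f.support := by
        rw [mem_support_iff, ← finSuccEquiv_coeff_coeff]
        exact mem_support_iff.mp hmm
      have := hs _ hmem 0
      rw [Finsupp.cons_zero] at this
      omega
    -- each coefficient vanishes on the small grid
    have hcoeff : ∀ (p' : Fin n → K), (∀ i, p' i ∈ D i.succ) →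
        ∀ k, eval p' (F.coeff k) = 0 := by
      intro p' hp' k
      set u := F.map (eval p') with hu
      have hu0 : u = 0 := by
        by_cases h0 : u = 0
        · exact h0
        apply Polynomial.eq_zero_of_natDegree_lt_card_of_eval_eq_zero' u (D 0)
        · intro y hy
          rw [hu, ← eval_eq_eval_mv_eval']
          apply hv
          intro i
          refine Fin.cases ?_ ?_ i
          · simpa using hy
          · intro j; simpa using hp' j
        · by_contra hlt
          push_neg at hlt
          have hc : u.coeff u.natDegree ≠ 0 := by
            rw [← Polynomial.leadingCoeff]
            exact Polynomial.leadingCoeff_ne_zero.mpr h0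
          rw [hu, Polynomial.coeff_map, hdeg _ hlt, map_zero] at hc
          exact hc rfl
      have := congrArg (fun q => Polynomial.coeff q k) hu0
      simpa [hu, Polynomial.coeff_map] using this
    -- conclude coefficients are zero
    have hFk : ∀ k, F.coeff k = 0 := by
      intro k
      apply ih (fun i => D i.succ)
      · intro mm hmm i
        have hmem : (mm.cons k) ∈ f.support := by
          rw [mem_support_iff, ← finSuccEquiv_coeff_coeff]
          exact mem_support_iff.mp hmm
        have := hs _ hmem i.succ
        rwa [Finsupp.cons_succ] at this
      · intro p' hp'
        exact hcoeff p' hp' k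
    have hF0 : F = 0 := Polynomial.ext fun k => by rw [hFk k]; simp
    apply (finSuccEquiv K n).injective
    rw [map_zero]
    exact hF0

/-- Crux: a polynomial whose exponents lie in the relative box, vanishing on grid(D) ∖ grid(E),
is zero. -/
lemma vanish_box_rel : ∀ {n : ℕ} (D E : Fin n → Finset K), (∀ i, E i ⊆ D i) →
    ∀ (f : MvPolynomial (Fin n) K),
    (∀ a ∈ f.support, (∀ i, a i < (D i).card) ∧ (∃ i, a i < (D i).card - (E i).card)) →
    (∀ p : Fin n → K, (∀ i, p i ∈ D i) → (∃ i, p i ∉ E i) → eval p f = 0) → f = 0 := by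
  intro n
  induction n with
  | zero =>
    intro D E _ f hs _
    by_contra hf
    obtain ⟨a, ha⟩ := Finset.nonempty_iff_ne_empty.mpr
      (fun h => hf (support_eq_empty.mp h))
    obtain ⟨i, _⟩ := (hs a ha).2
    exact i.elim0
  | succ n ih =>
    intro D E hED f hs hv
    classical
    set F := finSuccEquiv K n f with hF
    have hmemf : ∀ (k : ℕ) (mm : Fin n →₀ ℕ), mm ∈ (F.coeff k).support → mm.cons k ∈ f.support := by
      intro k mm hmm
      rw [mem_support_iff, ← finSuccEquiv_coeff_coeff]
      exact mem_support_iff.mp hmm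
    have hdeg : ∀ k, (D 0).card ≤ k → F.coeff k = 0 := by
      intro k hk
      by_contra h0
      obtain ⟨mm, hmm⟩ := Finset.nonempty_iff_ne_empty.mpr
        (fun h => h0 (support_eq_empty.mp h))
      have := (hs _ (hmemf k mm hmm)).1 0
      rw [Finsupp.cons_zero] at this
      omega
    -- Step A : coefficients vanish at relative points of the smaller grids
    have hA : ∀ (p' : Fin n → K), (∀ i, p' i ∈ D i.succ) → (∃ i, p' i ∉ E i.succ) →
        ∀ k, eval p' (F.coeff k) = 0 := by
      intro p' hp' hrel k
      set u := F.map (eval p') with hu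
      have hu0 : u = 0 := by
        by_cases h0 : u = 0
        · exact h0
        apply Polynomial.eq_zero_of_natDegree_lt_card_of_eval_eq_zero' u (D 0)
        · intro y hy
          rw [hu, ← eval_eq_eval_mv_eval']
          apply hv
          · intro i
            refine Fin.cases ?_ ?_ i
            · simpa using hy
            · intro j; simpa using hp' j
          · obtain ⟨j, hj⟩ := hrel
            exact ⟨j.succ, by simpa using hj⟩
        · by_contra hlt
          push_neg at hlt
          have hc : u.coeff u.natDegree ≠ 0 := by
            rw [← Polynomial.leadingCoeff]
            exact Polynomial.leadingCoeff_ne_zero.mpr h0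
          rw [hu, Polynomial.coeff_map, hdeg _ hlt, map_zero] at hc
          exact hc rfl
      have := congrArg (fun q => Polynomial.coeff q k) hu0
      simpa [hu, Polynomial.coeff_map] using this
    -- Step B : high coefficients (k ≥ δ₀) are zero
    have hB : ∀ k, (D 0).card - (E 0).card ≤ k → F.coeff k = 0 := by
      intro k hk
      apply ih (fun i => D i.succ) (fun i => E i.succ) (fun i => hED i.succ)
      · intro mm hmm
        have h1 := (hs _ (hmemf k mm hmm)).1
        obtain ⟨i, hi⟩ := (hs _ (hmemf k mm hmm)).2
        constructor
        · intro j
          have := h1 j.succ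
          rwa [Finsupp.cons_succ] at this
        · revert hi
          refine Fin.cases ?_ ?_ i
          · intro hi0
            rw [Finsupp.cons_zero] at hi0
            omega
          · intro j hij
            exact ⟨j, by rwa [Finsupp.cons_succ] at hij⟩
      · intro p' hp' hrel
        exact hA p' hp' hrel k
    -- Step C : coefficients vanish at points of grid(E∘succ)
    have hC : ∀ (p' : Fin n → K), (∀ i, p' i ∈ E i.succ) → ∀ k, eval p' (F.coeff k) = 0 := by
      intro p' hp' k
      set u := F.map (eval p') with hu
      have hu0 : u = 0 := by
        by_cases h0 : u = 0
        · exact h0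
        apply Polynomial.eq_zero_of_natDegree_lt_card_of_eval_eq_zero' u (D 0 \ E 0)
        · intro y hy
          rw [Finset.mem_sdiff] at hy
          rw [hu, ← eval_eq_eval_mv_eval']
          apply hv
          · intro i
            refine Fin.cases ?_ ?_ i
            · simpa using hy.1
            · intro j; simpa using hED j.succ (hp' j)
          · exact ⟨0, by simpa using hy.2⟩
        · rw [Finset.card_sdiff_of_subset (hED 0)]
          by_contra hlt
          push_neg at hlt
          have hc : u.coeff u.natDegree ≠ 0 := by
            rw [← Polynomial.leadingCoeff]
            exact Polynomial.leadingCoeff_ne_zero.mpr h0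
          rw [hu, Polynomial.coeff_map, hB _ hlt, map_zero] at hc
          exact hc rfl
      have := congrArg (fun q => Polynomial.coeff q k) hu0
      simpa [hu, Polynomial.coeff_map] using this
    -- Step D : all coefficients are zero
    have hFk : ∀ k, F.coeff k = 0 := by
      intro k
      apply vanish_box_grid (fun i => D i.succ)
      · intro mm hmm i
        have := (hs _ (hmemf k mm hmm)).1 i.succ
        rwa [Finsupp.cons_succ] at this
      · intro p' hp'
        by_cases hcase : ∀ j, p' j ∈ E j.succ
        · exact hC p' hcase k
        · push_neg at hcase
          exact hA p' hp' hcase k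
    have hF0 : F = 0 := Polynomial.ext fun k => by rw [hFk k]; simp
    apply (finSuccEquiv K n).injective
    rw [map_zero]
    exact hF0


/-- exponents in the "universal" leading term set. -/
def Jset (D E : Fin n → Finset K) (a : Fin n →₀ ℕ) : Prop :=
  (∃ i, (D i).card ≤ a i) ∨ (∀ i, (D i).card - (E i).card ≤ a i)

/-- the grid difference, as a set of points. -/
def relSet (D E : Fin n → Finset K) : Set (Fin n → K) :=
  {p | (∀ i, p i ∈ D i) ∧ ∃ i, p i ∉ E i}

noncomputable def delta (D E : Fin n → Finset K) : Fin n →₀ ℕ :=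
  ∑ i, Finsupp.single i ((D i).card - (E i).card)

lemma delta_apply (D E : Fin n → Finset K) (j : Fin n) :
    delta D E j = (D j).card - (E j).card := by
  classical
  rw [delta, Finsupp.finset_sum_apply]
  rw [Finset.sum_eq_single j]
  · simp
  · intro x _ hxj
    exact Finsupp.single_eq_of_ne' hxj
  · intro h
    exact absurd (Finset.mem_univ j) h

variable [DecidableEq K]

/-- the polynomial `∏ᵢ ∏_{c ∈ Dᵢ∖Eᵢ} (Xᵢ - c)`. -/
noncomputable def gp (D E : Fin n → Finset K) : MvPolynomial (Fin n) K :=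
  ∏ i, linProd i (D i \ E i)

lemma linProd_mem (D E : Fin n → Finset K) (i : Fin n) :
    linProd (K := K) i (D i) ∈ vanishingIdealOfPoints (relSet D E) :=
  mem_vanishing.mpr fun p hp => eval_linProd_eq_zero (hp.1 i)

lemma gp_mem (D E : Fin n → Finset K) :
    gp D E ∈ vanishingIdealOfPoints (relSet D E) := by
  classical
  apply mem_vanishing.mpr
  rintro p ⟨hp1, i, hi⟩
  rw [gp, map_prod]
  exact Finset.prod_eq_zero (Finset.mem_univ i)
    (eval_linProd_eq_zero (Finset.mem_sdiff.mpr ⟨hp1 i, hi⟩))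

lemma gp_ne_zero (D E : Fin n → Finset K) : gp D E ≠ 0 := by
  classical
  rw [gp, Finset.prod_ne_zero_iff]
  exact fun i _ => linProd_ne_zero i _

lemma lead_gp (D E : Fin n → Finset K) (hED : ∀ i, E i ⊆ D i) :
    leadMonomial m (gp D E) = delta D E ∧ (gp D E).coeff (leadMonomial m (gp D E)) = 1 := by
  classical
  have h := lead_prod_monic m Finset.univ (fun i => linProd (K := K) i (D i \ E i))
    (fun i _ => linProd_ne_zero i _)
    (fun i _ => coeff_lead_linProd m i _)
  beta_reduce at h
  refine ⟨?_, h.2.2⟩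
  rw [gp, h.2.1, delta]
  apply Finset.sum_congr rfl
  intro i _
  rw [lead_linProd, Finset.card_sdiff_of_subset (hED i)]

/-- existence of a monic reducer in the ideal for every exponent in `Jset`. -/
lemma gen_exists (D E : Fin n → Finset K) (hED : ∀ i, E i ⊆ D i) {b : Fin n →₀ ℕ}
    (hb : Jset D E b) :
    ∃ G : MvPolynomial (Fin n) K, G ∈ vanishingIdealOfPoints (relSet D E) ∧ G ≠ 0 ∧
      leadMonomial m G ≤ b ∧ G.coeff (leadMonomial m G) = 1 := by
  rcases hb with ⟨i, hi⟩ | hall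
  · refine ⟨linProd i (D i), linProd_mem D E i, linProd_ne_zero i _, ?_, ?_⟩
    · rw [lead_linProd]
      exact Finsupp.single_le_iff.mpr hi
    · exact coeff_lead_linProd m i _
  · refine ⟨gp D E, gp_mem D E, gp_ne_zero D E, ?_, (lead_gp m D E hED).2⟩
    rw [(lead_gp m D E hED).1]
    rw [Finsupp.le_def]
    intro j
    rw [delta_apply]
    exact hall j

/-- Key lemma: the leading monomial of every nonzero element of the ideal lies in `Jset`. -/
lemma key (D E : Fin n → Finset K) (hED : ∀ i, E i ⊆ D i) :
    ∀ f ∈ vanishingIdealOfPoints (relSet D E), f ≠ 0 → Jset D E (leadMonomial m f) := by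
  classical
  intro f hf hf0
  by_contra hJ
  suffices main : ∀ β : m.syn, ∀ f, f ∈ vanishingIdealOfPoints (relSet D E) → f ≠ 0 →
      ¬ Jset D E (leadMonomial m f) →
      (∀ c ∈ f.support, Jset D E c → m.toSyn c < β) → False by
    refine main (m.toSyn (leadMonomial m f)) f hf hf0 hJ ?_
    intro c hc hcJ
    refine lt_of_le_of_ne (le_lead m hc) (fun he => hJ ?_)
    rwa [← m.toSyn.injective he]
  clear hf hf0 hJ f
  intro β
  induction β using WellFoundedLT.induction with
  | _ β IH =>
  intro f hfI hf0 hJ hbound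
  by_cases hall : ∀ c ∈ f.support, ¬ Jset D E c
  · apply hf0
    apply vanish_box_rel D E hED f
    · intro a ha
      have h2 := hall a ha
      simp only [Jset, not_or, not_exists, not_le, not_forall] at h2
      exact h2
    · intro p hp1 hp2
      exact mem_vanishing.mp hfI p ⟨hp1, hp2⟩
  · push_neg at hall
    obtain ⟨c0, hc0s, hc0J⟩ := hall
    set T := f.support.filter (fun c => Jset D E c) with hT
    have hTne : T.Nonempty := ⟨c0, Finset.mem_filter.mpr ⟨hc0s, hc0J⟩⟩
    obtain ⟨b, hbT, hbmax⟩ := Finset.exists_max_image T (fun c => m.toSyn c) hTne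
    have hbsup : b ∈ f.support := (Finset.mem_filter.mp hbT).1
    have hbJ : Jset D E b := (Finset.mem_filter.mp hbT).2
    obtain ⟨G, hGI, hG0, hGle, hGc⟩ := gen_exists m D E hED hbJ
    set s := leadMonomial m G with hs
    set t : MvPolynomial (Fin n) K := monomial (b - s) (f.coeff b) * G with ht
    have hbsum : (b - s) + s = b := tsub_add_cancel_of_le hGle
    have htc : t.coeff b = f.coeff b := by
      have h1 : coeff ((b - s) + s) (monomial (b - s) (f.coeff b) * G)
          = (f.coeff b) * G.coeff s := coeff_monomial_mul _ _ _ _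
      rw [hbsum] at h1
      rw [ht, h1, hGc, mul_one]
    have htsupp : ∀ c ∈ t.support, m.toSyn c ≤ m.toSyn b := by
      intro c hcsupp
      rw [ht] at hcsupp
      obtain ⟨u, hu, v, hv, rfl⟩ := Finset.mem_add.mp (MvPolynomial.support_mul _ _ hcsupp)
      have hu' : u = b - s := Finset.mem_singleton.mp (MvPolynomial.support_monomial_subset hu)
      calc m.toSyn (u + v) = m.toSyn (b - s) + m.toSyn v := by rw [hu', map_add]
        _ ≤ m.toSyn (b - s) + m.toSyn s := by
            exact add_le_add_right (le_lead m hv) _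
        _ = m.toSyn b := by rw [← map_add, hbsum]
    set f' := f - t with hf'
    have hf'I : f' ∈ vanishingIdealOfPoints (relSet D E) :=
      Submodule.sub_mem _ hfI (Ideal.mul_mem_left _ _ hGI)
    have hfb' : f'.coeff b = 0 := by rw [hf', coeff_sub, htc, sub_self]
    set a := leadMonomial m f with ha
    have hba : m.toSyn b < m.toSyn a :=
      lt_of_le_of_ne (le_lead m hbsup) (fun he => hJ (m.toSyn.injective he ▸ hbJ))
    have htca : t.coeff a = 0 := by
      by_contra h
      exact absurd (htsupp a (mem_support_iff.mpr h)) (not_le.mpr hba)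
    have hfa' : f'.coeff a = f.coeff a := by rw [hf', coeff_sub, htca, sub_zero]
    have hf'0 : f' ≠ 0 := by
      intro h
      apply lead_coeff_ne_zero m hf0
      rw [← ha, ← hfa', h, coeff_zero]
    have hsubsup : f'.support ⊆ f.support ∪ t.support := by
      intro c hc
      exact MvPolynomial.support_sub (Fin n) f t hc
    have hsupp' : ∀ c ∈ f'.support, m.toSyn c ≤ m.toSyn a := by
      intro c hc
      rcases Finset.mem_union.mp (hsubsup hc) with h | h
      · exact le_lead m h
      · exact le_of_lt (lt_of_le_of_lt (htsupp c h) hba)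
    have hlead' : leadMonomial m f' = a := by
      apply lead_eq m _ hsupp'
      rw [hfa']
      exact lead_coeff_ne_zero m hf0
    apply IH (m.toSyn b) (hbound b hbsup hbJ) f' hf'I hf'0 (by rw [hlead']; exact hJ)
    intro c hc hcJ
    have hcb : c ≠ b := by
      intro he
      exact (mem_support_iff.mp hc) (he ▸ hfb')
    have hle : m.toSyn c ≤ m.toSyn b := by
      rcases Finset.mem_union.mp (hsubsup hc) with h | h
      · exact hbmax c (Finset.mem_filter.mpr ⟨h, hcJ⟩)
      · exact htsupp c h
    exact lt_of_le_of_ne hle (fun he => hcb (m.toSyn.injective he))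

/-- The universal leading term ideal. -/
noncomputable def Jideal (D E : Fin n → Finset K) : Ideal (MvPolynomial (Fin n) K) :=
  Ideal.span {q | ∃ a : Fin n →₀ ℕ, Jset D E a ∧ q = monomial a (1 : K)}

lemma lt_eq (D E : Fin n → Finset K) (hED : ∀ i, E i ⊆ D i) :
    leadTermIdeal m (vanishingIdealOfPoints (relSet D E)) = Jideal D E := by
  apply le_antisymm
  · rw [leadTermIdeal, Ideal.span_le]
    rintro q ⟨f, hfI, hf0, rfl⟩
    exact Ideal.subset_span ⟨leadMonomial m f, key m D E hED f hfI hf0, rfl⟩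
  · rw [Jideal, Ideal.span_le]
    rintro q ⟨a, haJ, rfl⟩
    rcases haJ with ⟨i, hi⟩ | hall
    · have hmem : (monomial (Finsupp.single i (D i).card) (1 : K)) ∈
          leadTermIdeal m (vanishingIdealOfPoints (relSet D E)) :=
        Ideal.subset_span ⟨linProd i (D i), linProd_mem D E i, linProd_ne_zero i _,
          by rw [lead_linProd]⟩
      have heq : monomial (a - Finsupp.single i (D i).card) (1 : K) *
          monomial (Finsupp.single i (D i).card) (1 : K) = monomial a (1 : K) := by
        rw [monomial_mul, one_mul, tsub_add_cancel_of_le (Finsupp.single_le_iff.mpr hi)]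
      exact heq ▸ Ideal.mul_mem_left _ _ hmem
    · have hd : delta D E ≤ a := by
        rw [Finsupp.le_def]
        intro j
        rw [delta_apply]
        exact hall j
      have hmem : (monomial (delta D E) (1 : K)) ∈
          leadTermIdeal m (vanishingIdealOfPoints (relSet D E)) :=
        Ideal.subset_span ⟨gp D E, gp_mem D E, gp_ne_zero D E, by rw [(lead_gp m D E hED).1]⟩
      have heq : monomial (a - delta D E) (1 : K) * monomial (delta D E) (1 : K)
          = monomial a (1 : K) := by
        rw [monomial_mul, one_mul, tsub_add_cancel_of_le hd]
      exact heq ▸ Ideal.mul_mem_left _ _ hmem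

lemma colon_eq (D E : Fin n → Finset K) (X Y : Set (Fin n → K))
    (hX : X = {p | ∀ i, p i ∈ D i}) (hY : Y = {p | ∀ i, p i ∈ E i}) :
    (vanishingIdealOfPoints X).colon (vanishingIdealOfPoints Y)
      = vanishingIdealOfPoints (X \ Y) := by
  apply le_antisymm
  · intro f hf
    rw [mem_vanishing]
    rintro p ⟨hpX, hpY⟩
    have hpE : ∃ i, p i ∉ E i := by
      rw [hY] at hpY
      exact not_forall.mp hpY
    obtain ⟨i, hi⟩ := hpE
    have hq : linProd (K := K) i (E i) ∈ vanishingIdealOfPoints Y := by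
      apply mem_vanishing.mpr
      intro q hqY
      rw [hY] at hqY
      exact eval_linProd_eq_zero (hqY i)
    have hmul := Submodule.mem_colon.mp hf _ hq
    rw [smul_eq_mul] at hmul
    have h0 : eval p (f * linProd i (E i)) = 0 := mem_vanishing.mp hmul p hpX
    rw [map_mul] at h0
    exact (mul_eq_zero.mp h0).resolve_right (eval_linProd_ne_zero hi)
  · intro f hf
    rw [Submodule.mem_colon]
    intro h hh
    rw [smul_eq_mul, mem_vanishing]
    intro p hpX
    by_cases hpY : p ∈ Y
    · rw [map_mul, mem_vanishing.mp hh p hpY, mul_zero]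
    · rw [map_mul, mem_vanishing.mp hf p ⟨hpX, hpY⟩, zero_mul]

end GFanAux

/-- If `Y ⊆ X` are grids of points, then `I(X) : I(Y) = I(X ∖ Y)` and this ideal has
GFan number 1. -/
theorem grid_minus_grid_GFanNum_one
    {n : ℕ} {K : Type*} [Field K]
    (D E : Fin n → Finset K) (hD : ∀ i, (D i).Nonempty) (hE : ∀ i, (E i).Nonempty)
    (hED : ∀ i, E i ⊆ D i)
    (X Y : Set (Fin n → K))
    (hX : X = {p | ∀ i, p i ∈ D i}) (hY : Y = {p | ∀ i, p i ∈ E i}) :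
    (vanishingIdealOfPoints X).colon (vanishingIdealOfPoints Y)
        = vanishingIdealOfPoints (X \ Y) ∧
      ∀ m τ : MonomialOrder (Fin n),
        leadTermIdeal m ((vanishingIdealOfPoints X).colon (vanishingIdealOfPoints Y))
          = leadTermIdeal τ ((vanishingIdealOfPoints X).colon (vanishingIdealOfPoints Y)) := by
  classical
  have hcolon := GFanAux.colon_eq (K := K) D E X Y hX hY
  have hXZ : X \ Y = GFanAux.relSet D E := by
    rw [hX, hY]
    ext p
    simp [GFanAux.relSet, Set.mem_diff, not_forall]
  have h2 : (vanishingIdealOfPoints X).colon (vanishingIdealOfPoints Y)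
      = vanishingIdealOfPoints (GFanAux.relSet D E) := by
    rw [hcolon, hXZ]
  refine ⟨hcolon, ?_⟩
  intro m τ
  have e1 : leadTermIdeal m ((vanishingIdealOfPoints X).colon (vanishingIdealOfPoints Y))
      = GFanAux.Jideal D E := by
    rw [h2]
    exact GFanAux.lt_eq m D E hED
  have e2 : leadTermIdeal τ ((vanishingIdealOfPoints X).colon (vanishingIdealOfPoints Y))
      = GFanAux.Jideal D E := by
    rw [h2]
    exact GFanAux.lt_eq τ D E hED
  rw [e1, e2]
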